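/- Let τ > 0 and let A : [0,τ) → ℝ^{n×n} be continuous. Assume the system ẋ = A(t)x is prescribed-time attractive at τ, and that for every pair of indices i,j, the entry A_{ij}(t) tends to a limit in the extended reals [−∞,+∞] as t → τ⁻. Then μ(−A(t)) → +∞ as t → τ⁻. -/

import Mathlib

open Matrix Filter Topology

/-- Eigenvalues of a real matrix that is Hermitian (= symmetric); junk value `0` otherwise. -/
noncomputable def eigs {n : ℕ} (M : Matrix (Fin n) (Fin n) ℝ) : Fin n → ℝ :=
  if h : M.IsHermitian then h.eigenvalues else 0

/-- Largest eigenvalue of a real symmetric matrix. -/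
noncomputable def lamMax {n : ℕ} (M : Matrix (Fin n) (Fin n) ℝ) : ℝ := ⨆ i, eigs M i

/-- Smallest eigenvalue of a real symmetric matrix. -/
noncomputable def lamMin {n : ℕ} (M : Matrix (Fin n) (Fin n) ℝ) : ℝ := ⨅ i, eigs M i

/-- Logarithmic norm w.r.t. the Euclidean norm: `μ(M) = λ_max((M + Mᵀ)/2)`. -/
noncomputable def logNorm {n : ℕ} (M : Matrix (Fin n) (Fin n) ℝ) : ℝ :=
  lamMax ((1 / 2 : ℝ) • (M + Mᵀ))

/-- A matrix acting on Euclidean space. -/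
noncomputable def mulVecE {n : ℕ} (M : Matrix (Fin n) (Fin n) ℝ)
    (v : EuclideanSpace ℝ (Fin n)) : EuclideanSpace ℝ (Fin n) :=
  Matrix.toEuclideanCLM (𝕜 := ℝ) M v

/-- Operator norm of a matrix induced by the Euclidean vector norm. -/
noncomputable def opNorm {n : ℕ} (M : Matrix (Fin n) (Fin n) ℝ) : ℝ :=
  ‖Matrix.toEuclideanCLM (𝕜 := ℝ) M‖

/-- The LTV system `x' = A t * x` is prescribed-time attractive (PTA) at time `τ`:
every solution on `[0, τ)` satisfies `‖x t‖ → 0` as `t → τ⁻`. -/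
def PTA {n : ℕ} (A : ℝ → Matrix (Fin n) (Fin n) ℝ) (τ : ℝ) : Prop :=
  ∀ x : ℝ → EuclideanSpace ℝ (Fin n),
    (∀ t ∈ Set.Ico (0 : ℝ) τ, HasDerivAt x (mulVecE (A t) (x t)) t) →
    Filter.Tendsto (fun t => ‖x t‖) (𝓝[<] τ) (𝓝 0)

open Set in
/-- coordinates of `mulVecE`. -/
lemma mulVecE_apply {n : ℕ} (M : Matrix (Fin n) (Fin n) ℝ) (v : EuclideanSpace ℝ (Fin n))
    (i : Fin n) : mulVecE M v i = M.mulVec (fun j => v j) i :=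
  congrFun (Matrix.ofLp_toEuclideanCLM (𝕜 := ℝ) M v) i

lemma norm_mulVecE_le {n : ℕ} (M : Matrix (Fin n) (Fin n) ℝ) (v : EuclideanSpace ℝ (Fin n)) :
    ‖mulVecE M v‖ ≤ ‖Matrix.toEuclideanCLM (𝕜 := ℝ) M‖ * ‖v‖ :=
  (Matrix.toEuclideanCLM (𝕜 := ℝ) M).le_opNorm v

/-- Diagonal entries of a real symmetric matrix are at most the largest eigenvalue. -/
lemma diag_le_lamMax {n : ℕ} {M : Matrix (Fin n) (Fin n) ℝ} (hM : M.IsHermitian) (i : Fin n) :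
    M i i ≤ lamMax M := by
  have hne : Nonempty (Fin n) := ⟨i⟩
  have heig : eigs M = hM.eigenvalues := by rw [eigs, dif_pos hM]
  have hc : ∀ k, hM.eigenvalues k ≤ lamMax M := by
    intro k
    rw [lamMax, heig]
    exact le_ciSup (Set.Finite.bddAbove (Set.finite_range _)) k
  set U : Matrix (Fin n) (Fin n) ℝ := (hM.eigenvectorUnitary : Matrix (Fin n) (Fin n) ℝ) with hU
  have hUU : U * star U = 1 := (Matrix.mem_unitaryGroup_iff).mp (hM.eigenvectorUnitary).2
  have hsum1 : ∑ k, U i k * U i k = 1 := by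
    have := congrFun (congrFun hUU i) i
    simpa [Matrix.mul_apply, Matrix.one_apply, Matrix.star_apply] using this
  have hexp : M i i = ∑ k, hM.eigenvalues k * (U i k * U i k) := by
    conv_lhs => rw [hM.spectral_theorem]
    rw [Unitary.conjStarAlgAut_apply, Matrix.mul_apply]
    refine Finset.sum_congr rfl fun k _ => ?_
    rw [Matrix.mul_diagonal]
    simp [Matrix.star_apply, Function.comp, hU, Matrix.IsHermitian.eigenvectorUnitary_apply]
    ring
  rw [hexp]
  calc ∑ k, hM.eigenvalues k * (U i k * U i k)
      ≤ ∑ k, lamMax M * (U i k * U i k) := by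
        refine Finset.sum_le_sum fun k _ => ?_
        exact mul_le_mul_of_nonneg_right (hc k) (mul_self_nonneg _)
    _ = lamMax M := by rw [← Finset.mul_sum, hsum1, mul_one]

/-- The negated diagonal entries are bounded by the logarithmic norm of the negation. -/
lemma neg_diag_le_logNorm {n : ℕ} (M : Matrix (Fin n) (Fin n) ℝ) (i : Fin n) :
    -(M i i) ≤ logNorm (-M) := by
  set B : Matrix (Fin n) (Fin n) ℝ := (1 / 2 : ℝ) • (-M + (-M)ᵀ) with hB
  have hBh : B.IsHermitian := by
    unfold Matrix.IsHermitian
    ext a b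
    simp [hB, Matrix.conjTranspose_apply, Matrix.transpose_apply, Matrix.add_apply,
      Matrix.smul_apply, Matrix.neg_apply, smul_eq_mul]
    ring
  have hBii : B i i = -(M i i) := by
    simp [hB, Matrix.add_apply, Matrix.smul_apply, Matrix.transpose_apply, Matrix.neg_apply,
      smul_eq_mul]
    ring
  have := diag_le_lamMax hBh i
  rw [hBii] at this
  exact this
open Set in
/-- The determinant as a continuous multilinear map in the rows. -/
noncomputable def detCMM (n : ℕ) :
    ContinuousMultilinearMap ℝ (fun _ : Fin n => (Fin n → ℝ)) ℝ :=
  MultilinearMap.mkContinuous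
    (Matrix.detRowAlternating : (Fin n → ℝ) [⋀^Fin n]→ₗ[ℝ] ℝ).toMultilinearMap
    (n.factorial : ℝ) (by
      intro m
      have hform : (Matrix.detRowAlternating (R := ℝ) (n := Fin n)).toMultilinearMap m
          = (Matrix.of m).det := rfl
      rw [hform, Matrix.det_apply]
      refine (norm_sum_le _ _).trans ?_
      have key : ∀ σ : Equiv.Perm (Fin n),
          ‖Equiv.Perm.sign σ • ∏ i, Matrix.of m (σ i) i‖ ≤ ∏ i, ‖m i‖ := by
        intro σ
        have h1 : ‖Equiv.Perm.sign σ • ∏ i, Matrix.of m (σ i) i‖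
            = ‖∏ i, Matrix.of m (σ i) i‖ := by
          rcases Int.units_eq_one_or (Equiv.Perm.sign σ) with h | h <;>
            simp [h]
        rw [h1]
        calc ‖∏ i, Matrix.of m (σ i) i‖ ≤ ∏ i, ‖m (σ i)‖ := by
              rw [Real.norm_eq_abs, Finset.abs_prod]
              refine Finset.prod_le_prod (fun i _ => abs_nonneg _) (fun i _ => ?_)
              simpa using norm_le_pi_norm (m (σ i)) i
          _ = ∏ i, ‖m i‖ := Equiv.prod_comp σ (fun i => ‖m i‖)
      calc ∑ σ : Equiv.Perm (Fin n), ‖Equiv.Perm.sign σ • ∏ i, Matrix.of m (σ i) i‖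
          ≤ (Finset.univ : Finset (Equiv.Perm (Fin n))).card • (∏ i, ‖m i‖) :=
            Finset.sum_le_card_nsmul _ _ _ (fun σ _ => key σ)
        _ = (n.factorial : ℝ) * ∏ i, ‖m i‖ := by
            rw [Finset.card_univ, nsmul_eq_mul, Fintype.card_perm, Fintype.card_fin])

lemma detCMM_apply {n : ℕ} (m : Fin n → (Fin n → ℝ)) :
    detCMM n m = (Matrix.of m).det := rfl

/-- The algebraic core of Liouville's formula. -/
lemma sum_det_updateRow {n : ℕ} (P B : Matrix (Fin n) (Fin n) ℝ) :
    ∑ j, (P.updateRow j (B *ᵥ P j)).det = B.trace * P.det := by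
  have h1 : ∀ j, (P.updateRow j (B *ᵥ P j)).det
      = ∑ k, P j k * (P.updateRow j (fun i => B i k)).det := by
    intro j
    have hw : (B *ᵥ P j) = ∑ k, P j k • (fun i => B i k) := by
      funext i
      simp [Matrix.mulVec, dotProduct, Finset.sum_apply, mul_comm]
    rw [hw]
    have hlin := Matrix.cramer_transpose_apply (A := P) (b := ∑ k, P j k • (fun i => B i k)) j
    rw [← hlin, map_sum]
    rw [Finset.sum_apply]
    refine Finset.sum_congr rfl fun k _ => ?_
    rw [LinearMap.map_smul, Pi.smul_apply, smul_eq_mul, Matrix.cramer_transpose_apply]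
  calc ∑ j, (P.updateRow j (B *ᵥ P j)).det
      = ∑ j, ∑ k, P j k * (P.updateRow j (fun i => B i k)).det :=
        Finset.sum_congr rfl fun j _ => h1 j
    _ = ∑ k, ∑ j, P j k * (P.updateRow j (fun i => B i k)).det := Finset.sum_comm
    _ = ∑ k, P.det * B k k := by
        refine Finset.sum_congr rfl fun k _ => ?_
        have h2 := congrFun (Matrix.mulVec_cramer Pᵀ (fun i => B i k)) k
        have h3 : (Pᵀ *ᵥ Pᵀ.cramer fun i => B i k) k
            = ∑ j, P j k * (P.updateRow j (fun i => B i k)).det := by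
          rw [Matrix.mulVec, dotProduct]
          refine Finset.sum_congr rfl fun j _ => ?_
          rw [Matrix.transpose_apply, Matrix.cramer_transpose_apply]
        rw [h3] at h2
        rw [h2]
        simp [Matrix.det_transpose, mul_comm]
    _ = B.trace * P.det := by
        rw [Matrix.trace, Finset.sum_mul]
        exact Finset.sum_congr rfl fun k _ => by rw [Matrix.diag_apply]; ring

/-- Liouville's formula: derivative of the determinant of a matrix of solutions. -/
lemma liouville_hasDerivAt {n : ℕ} (A₀ : Matrix (Fin n) (Fin n) ℝ)
    (xs : Fin n → ℝ → EuclideanSpace ℝ (Fin n)) (t : ℝ)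
    (hxs : ∀ j, HasDerivAt (xs j) (mulVecE A₀ (xs j t)) t) :
    HasDerivAt (fun s => (Matrix.of (fun j i => xs j s i)).det)
      (A₀.trace * (Matrix.of (fun j i => xs j t i)).det) t := by
  classical
  set c : ℝ → (Fin n → (Fin n → ℝ)) := fun s j i => xs j s i with hc
  set c' : Fin n → (Fin n → ℝ) := fun j i => mulVecE A₀ (xs j t) i with hc'
  have hder : HasDerivAt c c' t := by
    rw [hasDerivAt_pi]
    intro j
    -- coordinates of xs j
    have : HasDerivAt (fun s => (WithLp.equiv 2 (Fin n → ℝ)) (xs j s))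
        ((WithLp.equiv 2 (Fin n → ℝ)) (mulVecE A₀ (xs j t))) t := by
      exact ((PiLp.continuousLinearEquiv 2 ℝ (fun _ : Fin n => ℝ)).toContinuousLinearMap.hasFDerivAt).comp_hasDerivAt t (hxs j)
    exact this
  have hF := (detCMM n).hasFDerivAt (c t)
  have hcomp := hF.comp_hasDerivAt t hder
  have hterm : ∀ j, (detCMM n) (Function.update (c t) j (c' j))
      = ((Matrix.of (c t)).updateRow j (A₀ *ᵥ (Matrix.of (c t) j))).det := by
    intro j
    have hv : c' j = A₀ *ᵥ (Matrix.of (c t) j) := by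
      funext i
      exact mulVecE_apply A₀ (xs j t) i
    have harg : (Matrix.of (Function.update (c t) j (c' j)) : Matrix (Fin n) (Fin n) ℝ)
        = (Matrix.of (c t)).updateRow j (A₀ *ᵥ (Matrix.of (c t) j)) := by
      rw [← hv]
      rfl
    rw [detCMM_apply, harg]
  have hval : ((detCMM n).linearDeriv (c t)) c'
      = A₀.trace * (Matrix.of (fun j i => xs j t i)).det := by
    rw [ContinuousMultilinearMap.linearDeriv_apply]
    rw [Finset.sum_congr rfl (fun j _ => hterm j), sum_det_updateRow]
  rw [hval] at hcomp
  exact hcomp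
open Set

lemma hasDerivWithinAt_singleton_any {n : ℕ} (f : ℝ → EuclideanSpace ℝ (Fin n)) (x : ℝ)
    (d : EuclideanSpace ℝ (Fin n)) : HasDerivWithinAt f d {x} x := by
  simp only [HasDerivWithinAt, HasFDerivWithinAt, nhdsWithin_singleton, HasDerivAtFilter,
    hasFDerivAtFilter_iff_isLittleO, Asymptotics.isLittleO_pure]
  simp

lemma continuous_toEuclideanCLM {n : ℕ} :
    Continuous (fun M : Matrix (Fin n) (Fin n) ℝ =>
      (Matrix.toEuclideanCLM (𝕜 := ℝ) M :
        EuclideanSpace ℝ (Fin n) →L[ℝ] EuclideanSpace ℝ (Fin n))) := by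
  have heq : (fun M : Matrix (Fin n) (Fin n) ℝ =>
      (Matrix.toEuclideanCLM (𝕜 := ℝ) M :
        EuclideanSpace ℝ (Fin n) →L[ℝ] EuclideanSpace ℝ (Fin n)))
      = fun M => LinearMap.toContinuousLinearMap (Matrix.toEuclideanLin M) := by
    funext M
    apply ContinuousLinearMap.coe_injective
    rw [Matrix.coe_toEuclideanCLM_eq_toEuclideanLin]
    exact (LinearMap.coe_toContinuousLinearMap (Matrix.toEuclideanLin M)).symm
  rw [heq]
  exact LinearMap.continuous_of_finiteDimensional
    ((LinearMap.toContinuousLinearMap : _ ≃ₗ[ℝ] _).toLinearMap.comp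
      (Matrix.toEuclideanLin : Matrix (Fin n) (Fin n) ℝ ≃ₗ[ℝ] _).toLinearMap)

lemma continuous_mulVecE_const {n : ℕ} {B : ℝ → Matrix (Fin n) (Fin n) ℝ}
    (hB : Continuous B) (z : EuclideanSpace ℝ (Fin n)) :
    Continuous fun t => mulVecE (B t) z := by
  have : Continuous fun t => (Matrix.toEuclideanCLM (𝕜 := ℝ) (B t)) :=
    continuous_toEuclideanCLM.comp hB
  exact this.clm_apply continuous_const

lemma lipschitzWith_mulVecE {n : ℕ} {M : Matrix (Fin n) (Fin n) ℝ} {K : ℝ}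
    (hK : ‖Matrix.toEuclideanCLM (𝕜 := ℝ) M‖ ≤ K) :
    LipschitzWith K.toNNReal (fun z : EuclideanSpace ℝ (Fin n) => mulVecE M z) := by
  refine (Matrix.toEuclideanCLM (𝕜 := ℝ) M).lipschitz.weaken ?_
  have h1 : ‖Matrix.toEuclideanCLM (𝕜 := ℝ) M‖₊
      = Real.toNNReal ‖Matrix.toEuclideanCLM (𝕜 := ℝ) M‖ := by
    rw [← coe_nnnorm, Real.toNNReal_coe]
  rw [h1]
  exact Real.toNNReal_mono hK

lemma sol_norm_le {n : ℕ} {B : ℝ → Matrix (Fin n) (Fin n) ℝ} {K : ℝ}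
    (hK : ∀ t, ‖Matrix.toEuclideanCLM (𝕜 := ℝ) (B t)‖ ≤ K)
    {x : ℝ → EuclideanSpace ℝ (Fin n)} {a b : ℝ}
    (hx : ∀ t ∈ Icc a b, HasDerivWithinAt x (mulVecE (B t) (x t)) (Icc a b) t) :
    ∀ t ∈ Icc a b, ‖x t‖ ≤ ‖x a‖ * Real.exp (K * (t - a)) := by
  intro t ht
  have hcont : ContinuousOn x (Icc a b) := fun s hs => (hx s hs).continuousWithinAt
  have hder : ∀ s ∈ Ico a b, HasDerivWithinAt x (mulVecE (B s) (x s)) (Ici s) s := fun s hs =>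
    (hx s ⟨hs.1, hs.2.le⟩).mono_of_mem_nhdsWithin (Icc_mem_nhdsGE_of_mem hs)
  have hbound : ∀ s ∈ Ico a b, ‖mulVecE (B s) (x s)‖ ≤ K * ‖x s‖ + 0 := by
    intro s _
    rw [add_zero]
    exact (norm_mulVecE_le _ _).trans (mul_le_mul_of_nonneg_right (hK s) (norm_nonneg _))
  have := norm_le_gronwallBound_of_norm_deriv_right_le hcont hder le_rfl hbound t ht
  rwa [gronwallBound_ε0] at this

lemma glue_sol {n : ℕ} (B : ℝ → Matrix (Fin n) (Fin n) ℝ)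
    {x₁ x₂ : ℝ → EuclideanSpace ℝ (Fin n)} {a c d : ℝ} (hac : a ≤ c) (hcd : c ≤ d)
    (h1 : ∀ t ∈ Icc a c, HasDerivWithinAt x₁ (mulVecE (B t) (x₁ t)) (Icc a c) t)
    (h2 : ∀ t ∈ Icc c d, HasDerivWithinAt x₂ (mulVecE (B t) (x₂ t)) (Icc c d) t)
    (hxc : x₁ c = x₂ c) :
    ∃ x : ℝ → EuclideanSpace ℝ (Fin n), (∀ t ∈ Icc a c, x t = x₁ t) ∧
      (∀ t ∈ Icc c d, x t = x₂ t) ∧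
      ∀ t ∈ Icc a d, HasDerivWithinAt x (mulVecE (B t) (x t)) (Icc a d) t := by
  classical
  set x : ℝ → EuclideanSpace ℝ (Fin n) := fun t => if t ≤ c then x₁ t else x₂ t with hxdef
  have he1 : ∀ t ∈ Icc a c, x t = x₁ t := fun t ht => if_pos ht.2
  have he2 : ∀ t ∈ Icc c d, x t = x₂ t := by
    intro t ht
    by_cases hle : t ≤ c
    · have ht' : t = c := le_antisymm hle ht.1
      rw [ht']
      show (if c ≤ c then x₁ c else x₂ c) = x₂ c
      rw [if_pos le_rfl, hxc]
    · exact if_neg hle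
  refine ⟨x, he1, he2, ?_⟩
  intro t ht
  rcases lt_trichotomy t c with hlt | heq | hgt
  · have htm : t ∈ Icc a c := ⟨ht.1, hlt.le⟩
    have hmem : Icc a c ∈ 𝓝[Icc a d] t := by
      refine mem_nhdsWithin.2 ⟨Iio c, isOpen_Iio, hlt, ?_⟩
      intro s hs
      exact ⟨hs.2.1, hs.1.le⟩
    have hbase := (h1 t htm).mono_of_mem_nhdsWithin hmem
    have hxt : x t = x₁ t := if_pos hlt.le
    have hev : x =ᶠ[𝓝[Icc a d] t] x₁ := by
      filter_upwards [mem_nhdsWithin_of_mem_nhds (Iio_mem_nhds hlt)] with s hs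
      exact if_pos hs.le
    have hfin := hbase.congr_of_eventuallyEq hev hxt
    rw [hxt]
    exact hfin
  · have hcmem : c ∈ Icc a c := ⟨hac, le_rfl⟩
    have hcmem2 : c ∈ Icc c d := ⟨le_rfl, hcd⟩
    have hxc' : x c = x₁ c := if_pos le_rfl
    have hL : HasDerivWithinAt x (mulVecE (B c) (x₁ c)) (Icc a c) c :=
      (h1 c hcmem).congr he1 hxc'
    have hR : HasDerivWithinAt x (mulVecE (B c) (x₁ c)) (Icc c d) c := by
      rw [hxc]
      exact (h2 c hcmem2).congr he2 (by rw [hxc', hxc])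
    have hun := hL.union hR
    rw [Set.Icc_union_Icc_eq_Icc hac hcd] at hun
    rw [heq, show x c = x₁ c from hxc']
    exact hun
  · have htm : t ∈ Icc c d := ⟨hgt.le, ht.2⟩
    have hmem : Icc c d ∈ 𝓝[Icc a d] t :=
      mem_nhdsWithin.2 ⟨Ioi c, isOpen_Ioi, hgt, fun s hs => ⟨hs.1.le, hs.2.2⟩⟩
    have hbase := (h2 t htm).mono_of_mem_nhdsWithin hmem
    have hxt : x t = x₂ t := if_neg (not_le.2 hgt)
    have hev : x =ᶠ[𝓝[Icc a d] t] x₂ := by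
      filter_upwards [mem_nhdsWithin_of_mem_nhds (Ioi_mem_nhds hgt)] with s hs
      exact if_neg (not_le.2 hs)
    have hfin := hbase.congr_of_eventuallyEq hev hxt
    rw [hxt]
    exact hfin

lemma exists_sol_Icc {n : ℕ} (B : ℝ → Matrix (Fin n) (Fin n) ℝ) (hB : Continuous B)
    {K : ℝ} (hK0 : 0 ≤ K) (hK : ∀ t, ‖Matrix.toEuclideanCLM (𝕜 := ℝ) (B t)‖ ≤ K)
    (x₀ : EuclideanSpace ℝ (Fin n)) {T : ℝ} (hT : 0 ≤ T) :
    ∃ x : ℝ → EuclideanSpace ℝ (Fin n), x 0 = x₀ ∧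
      ∀ t ∈ Icc (0:ℝ) T, HasDerivWithinAt x (mulVecE (B t) (x t)) (Icc (0:ℝ) T) t := by
  classical
  set Bd : ℝ := (‖x₀‖ + 1) * Real.exp (K * T) with hBd
  have hexp1 : (1:ℝ) ≤ Real.exp (K * T) := Real.one_le_exp (by positivity)
  have hBd0 : 0 < Bd := by positivity
  have hBdx : ‖x₀‖ ≤ Bd := by
    calc ‖x₀‖ ≤ ‖x₀‖ + 1 := by linarith
      _ = (‖x₀‖ + 1) * 1 := by ring
      _ ≤ Bd := by
          rw [hBd]
          exact mul_le_mul_of_nonneg_left hexp1 (by positivity)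
  set Cs : ℝ := K * (Bd + 1) + 1 with hCs
  have hCs0 : 0 < Cs := by positivity
  set h : ℝ := 1 / Cs with hh
  have hh0 : 0 < h := by positivity
  have key : ∀ k : ℕ, ∃ x : ℝ → EuclideanSpace ℝ (Fin n), x 0 = x₀ ∧
      ∀ t ∈ Icc (0:ℝ) (min ((k:ℝ) * h) T),
        HasDerivWithinAt x (mulVecE (B t) (x t)) (Icc (0:ℝ) (min ((k:ℝ) * h) T)) t := by
    intro k
    induction k with
    | zero =>
      refine ⟨fun _ => x₀, rfl, ?_⟩
      intro t ht
      have hmin : min (((0:ℕ):ℝ) * h) T = 0 := by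
        rw [Nat.cast_zero, zero_mul]
        exact min_eq_left hT
      rw [hmin] at ht ⊢
      rw [Set.Icc_self] at ht ⊢
      have ht' : t = 0 := ht
      subst ht'
      exact hasDerivWithinAt_singleton_any _ _ _
    | succ k ih =>
      obtain ⟨x, hx0, hx⟩ := ih
      set c : ℝ := min ((k:ℝ) * h) T with hc
      set c' : ℝ := min (((k+1:ℕ):ℝ) * h) T with hc'
      have hkh : ((k+1:ℕ):ℝ) * h = (k:ℝ) * h + h := by push_cast; ring
      have hc0 : 0 ≤ c := le_min (by positivity) hT
      have hcc' : c ≤ c' := by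
        apply min_le_min _ le_rfl
        rw [hkh]
        linarith
      have hc'T : c' ≤ T := min_le_right _ _
      have hstep : c' - c ≤ h := by
        by_cases hmin : (k:ℝ) * h ≤ T
        · have hceq : c = (k:ℝ) * h := min_eq_left hmin
          have : c' ≤ ((k+1:ℕ):ℝ) * h := min_le_left _ _
          rw [hkh] at this
          linarith
        · push_neg at hmin
          have hceq : c = T := min_eq_right hmin.le
          have hceq' : c' = T := min_eq_right (by rw [hkh]; linarith)
          rw [hceq, hceq']
          linarith
      have hxc : ‖x c‖ ≤ Bd := by
        have hb := sol_norm_le hK hx c ⟨hc0, le_rfl⟩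
        rw [hx0, sub_zero] at hb
        calc ‖x c‖ ≤ ‖x₀‖ * Real.exp (K * c) := hb
          _ ≤ (‖x₀‖ + 1) * Real.exp (K * T) := by
              apply mul_le_mul (by linarith)
                (Real.exp_le_exp.2 (mul_le_mul_of_nonneg_left
                  (le_trans (min_le_right _ _) le_rfl) hK0))
                (Real.exp_pos _).le (by positivity)
          _ = Bd := rfl
      have pl : IsPicardLindelof (fun t z => mulVecE (B t) z) (tmin := c) (tmax := c')
          ⟨c, le_rfl, hcc'⟩ (x c) 1 0 (K * (Bd + 1)).toNNReal K.toNNReal := by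
        refine ⟨?_, ?_, ?_, ?_⟩
        · exact fun t _ => (lipschitzWith_mulVecE (hK t)).lipschitzOnWith
        · exact fun z _ => (continuous_mulVecE_const hB z).continuousOn
        · intro t _ z hz
          have h1 : ‖z‖ ≤ Bd + 1 := by
            have h2 : ‖z - x c‖ ≤ 1 := by simpa using mem_closedBall_iff_norm.1 hz
            calc ‖z‖ = ‖z - x c + x c‖ := by rw [sub_add_cancel]
              _ ≤ ‖z - x c‖ + ‖x c‖ := norm_add_le _ _
              _ ≤ Bd + 1 := by linarith
          exact ((norm_mulVecE_le _ _).trans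
            (mul_le_mul (hK t) h1 (norm_nonneg _) hK0)).trans (Real.le_coe_toNNReal _)
        · have hle : (K * (Bd+1)) * (c' - c) ≤ 1 := by
            calc (K * (Bd+1)) * (c' - c) ≤ Cs * h := by
                  apply mul_le_mul (by rw [hCs]; linarith) hstep (by linarith) hCs0.le
              _ = 1 := by rw [hh]; field_simp
          have hcoe : ((K * (Bd + 1)).toNNReal : ℝ) = K * (Bd + 1) :=
            Real.coe_toNNReal _ (by positivity)
          simp only [hcoe, NNReal.coe_one, NNReal.coe_zero, sub_zero, tsub_zero, sub_self]
          rw [max_eq_left (by linarith : (0:ℝ) ≤ c' - c)]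
          exact hle
      obtain ⟨y, hy0, hy⟩ := pl.exists_eq_forall_mem_Icc_hasDerivWithinAt₀
      obtain ⟨z, hz1, _, hz⟩ := glue_sol B hc0 hcc' hx hy hy0.symm
      exact ⟨z, by rw [hz1 0 ⟨le_rfl, hc0⟩, hx0], hz⟩
  obtain ⟨k, hk⟩ := exists_nat_ge (T / h)
  have hTk : T ≤ (k:ℝ) * h := by
    rw [div_le_iff₀ hh0] at hk
    linarith
  obtain ⟨x, hx0, hx⟩ := key k
  rw [min_eq_right hTk] at hx
  exact ⟨x, hx0, hx⟩
/-- A clamped version of `A`, globally continuous with globally bounded operator norm,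
agreeing with `A` on `[0, b]`. -/
lemma exists_clamped {n : ℕ} {τ : ℝ} {A : ℝ → Matrix (Fin n) (Fin n) ℝ}
    (hA : ContinuousOn A (Ico 0 τ)) {b : ℝ} (hb : b ∈ Ioo 0 τ) :
    ∃ (Ab : ℝ → Matrix (Fin n) (Fin n) ℝ) (K : ℝ), Continuous Ab ∧ 0 ≤ K ∧
      (∀ t, ‖Matrix.toEuclideanCLM (𝕜 := ℝ) (Ab t)‖ ≤ K) ∧
      (∀ t ∈ Icc (0:ℝ) b, Ab t = A t) := by
  set cl : ℝ → ℝ := fun t => max 0 (min t b) with hcl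
  have hclc : Continuous cl := continuous_const.max (continuous_id.min continuous_const)
  have hclmem : ∀ t, cl t ∈ Icc (0:ℝ) b := fun t =>
    ⟨le_max_left _ _, max_le hb.1.le (min_le_right _ _)⟩
  have hsub : Icc (0:ℝ) b ⊆ Ico 0 τ := fun s hs => ⟨hs.1, lt_of_le_of_lt hs.2 hb.2⟩
  set Ab : ℝ → Matrix (Fin n) (Fin n) ℝ := fun t => A (cl t) with hAb
  have hAbc : Continuous Ab := (hA.mono hsub).comp_continuous hclc hclmem
  have hg : ContinuousOn (fun s => ‖Matrix.toEuclideanCLM (𝕜 := ℝ) (A s)‖) (Icc 0 b) :=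
    (continuous_norm.comp continuous_toEuclideanCLM).comp_continuousOn (hA.mono hsub)
  obtain ⟨s₀, hs₀, hmax⟩ := isCompact_Icc.exists_isMaxOn ⟨0, ⟨le_rfl, hb.1.le⟩⟩ hg
  refine ⟨Ab, ‖Matrix.toEuclideanCLM (𝕜 := ℝ) (A s₀)‖, hAbc, norm_nonneg _, ?_, ?_⟩
  · exact fun t => hmax (hclmem t)
  · intro t ht
    have hclt : cl t = t := by
      show 0 ⊔ (t ⊓ b) = t
      rw [min_eq_left ht.2, max_eq_right ht.1]
    show A (cl t) = A t
    rw [hclt]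

/-- Solutions through `x₀` at `0`, defined for all times, solving the ODE on `[0, b)`. -/
lemma exists_sol_upto {n : ℕ} {τ : ℝ} {A : ℝ → Matrix (Fin n) (Fin n) ℝ}
    (hA : ContinuousOn A (Ico 0 τ)) (x₀ : EuclideanSpace ℝ (Fin n)) {b : ℝ} (hb : b ∈ Ioo 0 τ) :
    ∃ Y : ℝ → EuclideanSpace ℝ (Fin n), Y 0 = x₀ ∧
      (∀ t, t < 0 → Y t = x₀ + t • (mulVecE (A 0) x₀)) ∧
      ∀ t ∈ Ico (0:ℝ) b, HasDerivAt Y (mulVecE (A t) (Y t)) t := by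
  classical
  obtain ⟨Ab, K, hAbc, hK0, hKb, hEq⟩ := exists_clamped hA hb
  obtain ⟨x, hx0, hx⟩ := exists_sol_Icc Ab hAbc hK0 hKb x₀ hb.1.le
  set v₀ : EuclideanSpace ℝ (Fin n) := mulVecE (A 0) x₀ with hv₀
  set Y : ℝ → EuclideanSpace ℝ (Fin n) := fun t => if t < 0 then x₀ + t • v₀ else x t with hY
  have hY0 : Y 0 = x₀ := by
    rw [hY]
    simp only [lt_irrefl, if_false]
    exact hx0
  have hYneg : ∀ t, t < 0 → Y t = x₀ + t • v₀ := fun t ht => if_pos ht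
  have hYpos : ∀ t, 0 ≤ t → Y t = x t := fun t ht => if_neg (not_lt.2 ht)
  refine ⟨Y, hY0, hYneg, ?_⟩
  intro t ht
  rcases eq_or_lt_of_le ht.1 with h0 | h0
  · -- t = 0
    subst h0
    have hw : HasDerivAt (fun s : ℝ => x₀ + s • v₀) v₀ 0 := by
      simpa using ((hasDerivAt_id (0:ℝ)).smul_const v₀).const_add x₀
    have hL : HasDerivWithinAt Y v₀ (Iic 0) 0 := by
      refine (hw.hasDerivWithinAt).congr ?_ ?_
      · intro s hs
        rcases lt_or_eq_of_le (mem_Iic.1 hs) with h | h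
        · exact hYneg s h
        · rw [h, hY0]; simp
      · rw [hY0]; simp
    have hR : HasDerivWithinAt Y v₀ (Ici 0) 0 := by
      have hx00 : HasDerivWithinAt x (mulVecE (Ab 0) (x 0)) (Icc 0 b) 0 :=
        hx 0 ⟨le_rfl, hb.1.le⟩
      have hval : mulVecE (Ab 0) (x 0) = v₀ := by
        rw [hEq 0 ⟨le_rfl, hb.1.le⟩, hx0]
      rw [hval] at hx00
      have hmem : Icc (0:ℝ) b ∈ 𝓝[Ici 0] (0:ℝ) := Icc_mem_nhdsGE_of_mem ⟨le_rfl, hb.1⟩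
      exact (hx00.mono_of_mem_nhdsWithin hmem).congr
        (fun s hs => hYpos s hs) (hYpos 0 le_rfl)
    have hu := hL.union hR
    rw [Iic_union_Ici] at hu
    have := hu.hasDerivAt (by simp : (univ : Set ℝ) ∈ 𝓝 (0:ℝ))
    rw [hY0]
    exact this
  · -- 0 < t
    have hxd : HasDerivWithinAt x (mulVecE (Ab t) (x t)) (Icc 0 b) t := hx t ⟨ht.1, ht.2.le⟩
    have hder : HasDerivAt x (mulVecE (Ab t) (x t)) t :=
      hxd.hasDerivAt (Icc_mem_nhds h0 ht.2)
    have hev : Y =ᶠ[𝓝 t] x := by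
      filter_upwards [Ioi_mem_nhds h0] with s hs
      exact hYpos s hs.le
    have hfin := hder.congr_of_eventuallyEq hev
    rw [hYpos t ht.1, hEq t ⟨ht.1, ht.2.le⟩] at *
    exact hfin

/-- Global existence of solutions on `[0, τ)`. -/
lemma exists_sol_Ico {n : ℕ} {τ : ℝ} (hτ : 0 < τ) {A : ℝ → Matrix (Fin n) (Fin n) ℝ}
    (hA : ContinuousOn A (Ico 0 τ)) (x₀ : EuclideanSpace ℝ (Fin n)) :
    ∃ x : ℝ → EuclideanSpace ℝ (Fin n), x 0 = x₀ ∧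
      ∀ t ∈ Ico (0:ℝ) τ, HasDerivAt x (mulVecE (A t) (x t)) t := by
  classical
  -- uniqueness of solutions
  have uniq : ∀ b ∈ Ioo (0:ℝ) τ, ∀ Y Z : ℝ → EuclideanSpace ℝ (Fin n), Y 0 = Z 0 →
      (∀ s ∈ Ico (0:ℝ) b, HasDerivAt Y (mulVecE (A s) (Y s)) s) →
      (∀ s ∈ Ico (0:ℝ) b, HasDerivAt Z (mulVecE (A s) (Z s)) s) →
      ∀ c ∈ Ico (0:ℝ) b, Y c = Z c := by
    intro b hb Y Z h0 hY hZ c hc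
    obtain ⟨Ab, K, hAbc, hK0, hKb, hEq⟩ := exists_clamped hA hb
    have hv : ∀ t, LipschitzWith K.toNNReal (fun z => mulVecE (Ab t) z) :=
      fun t => lipschitzWith_mulVecE (hKb t)
    have hsub : Icc (0:ℝ) c ⊆ Ico 0 b := fun s hs => ⟨hs.1, lt_of_le_of_lt hs.2 hc.2⟩
    have hcontY : ContinuousOn Y (Icc 0 c) := fun s hs =>
      ((hY s (hsub hs)).continuousAt).continuousWithinAt
    have hcontZ : ContinuousOn Z (Icc 0 c) := fun s hs =>
      ((hZ s (hsub hs)).continuousAt).continuousWithinAt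
    have hderY : ∀ s ∈ Ico (0:ℝ) c, HasDerivWithinAt Y (mulVecE (Ab s) (Y s)) (Ici s) s := by
      intro s hs
      have := (hY s (hsub ⟨hs.1, hs.2.le⟩)).hasDerivWithinAt (s := Ici s)
      rwa [hEq s ⟨hs.1, hs.2.le.trans hc.2.le⟩]
    have hderZ : ∀ s ∈ Ico (0:ℝ) c, HasDerivWithinAt Z (mulVecE (Ab s) (Z s)) (Ici s) s := by
      intro s hs
      have := (hZ s (hsub ⟨hs.1, hs.2.le⟩)).hasDerivWithinAt (s := Ici s)
      rwa [hEq s ⟨hs.1, hs.2.le.trans hc.2.le⟩]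
    exact ODE_solution_unique hv hcontY hderY hcontZ hderZ h0 ⟨hc.1, le_rfl⟩
  -- increasing sequence of times approaching τ
  set bs : ℕ → ℝ := fun m => τ - τ / (m + 2) with hbs
  have hbm : ∀ m : ℕ, bs m ∈ Ioo (0:ℝ) τ := by
    intro m
    have h2 : (0:ℝ) < (m:ℝ) + 2 := by positivity
    have hlt : τ / ((m:ℝ) + 2) < τ := by
      rw [div_lt_iff₀ h2]
      nlinarith
    have hpos : 0 < τ / ((m:ℝ) + 2) := by positivity
    exact ⟨by simp [hbs]; linarith, by simp [hbs]; linarith⟩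
  have harch : ∀ t, t < τ → ∃ m : ℕ, t < bs m := by
    intro t ht
    have hd : 0 < τ - t := by linarith
    obtain ⟨m, hm⟩ := exists_nat_gt (τ / (τ - t))
    refine ⟨m, ?_⟩
    have h2 : (0:ℝ) < (m:ℝ) + 2 := by positivity
    have : τ / ((m:ℝ) + 2) < τ - t := by
      rw [div_lt_iff₀ h2]
      have hm' : τ / (τ - t) < (m:ℝ) + 2 := by linarith
      rw [div_lt_iff₀ hd] at hm'
      nlinarith
    simp only [hbs]
    linarith
  have hsolm : ∀ m : ℕ, ∃ Y : ℝ → EuclideanSpace ℝ (Fin n), Y 0 = x₀ ∧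
      (∀ t, t < 0 → Y t = x₀ + t • (mulVecE (A 0) x₀)) ∧
      ∀ t ∈ Ico (0:ℝ) (bs m), HasDerivAt Y (mulVecE (A t) (Y t)) t :=
    fun m => exists_sol_upto hA x₀ (hbm m)
  choose Ys hY0 hYneg hYd using hsolm
  set x : ℝ → EuclideanSpace ℝ (Fin n) :=
    fun t => if ht : ∃ m : ℕ, t < bs m then Ys (Nat.find ht) t else 0 with hxdef
  have hagree : ∀ (M : ℕ) (t : ℝ), t < bs M → x t = Ys M t := by
    intro M t htM
    have hex : ∃ m, t < bs m := ⟨M, htM⟩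
    rw [hxdef]
    simp only [dif_pos hex]
    set N := Nat.find hex with hN
    have htN : t < bs N := Nat.find_spec hex
    rcases lt_or_ge t 0 with hneg | hpos
    · rw [hYneg N t hneg, hYneg M t hneg]
    · set bmin : ℝ := min (bs N) (bs M) with hbmin
      have hbminm : bmin ∈ Ioo (0:ℝ) τ :=
        ⟨lt_min (hbm N).1 (hbm M).1, lt_of_le_of_lt (min_le_left _ _) (hbm N).2⟩
      have hYNd : ∀ s ∈ Ico (0:ℝ) bmin, HasDerivAt (Ys N) (mulVecE (A s) (Ys N s)) s :=
        fun s hs => hYd N s ⟨hs.1, lt_of_lt_of_le hs.2 (min_le_left _ _)⟩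
      have hYMd : ∀ s ∈ Ico (0:ℝ) bmin, HasDerivAt (Ys M) (mulVecE (A s) (Ys M s)) s :=
        fun s hs => hYd M s ⟨hs.1, lt_of_lt_of_le hs.2 (min_le_right _ _)⟩
      exact uniq bmin hbminm (Ys N) (Ys M) ((hY0 N).trans (hY0 M).symm) hYNd hYMd t
        ⟨hpos, lt_min htN htM⟩
  have hx0 : x 0 = x₀ := by
    rw [hagree 0 0 (hbm 0).1, hY0 0]
  refine ⟨x, hx0, ?_⟩
  intro t ht
  obtain ⟨M, htM⟩ := harch t ht.2
  have hev : x =ᶠ[𝓝 t] Ys M := by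
    filter_upwards [Iio_mem_nhds htM] with s hs
    exact hagree M s hs
  have hder := (hYd M t ⟨ht.1, htM⟩).congr_of_eventuallyEq hev
  rwa [hagree M t htM]
lemma coord_norm_le {n : ℕ} (x : EuclideanSpace ℝ (Fin n)) (i : Fin n) : ‖x i‖ ≤ ‖x‖ := by
  calc ‖x i‖ = Real.sqrt (‖x i‖^2) := (Real.sqrt_sq (norm_nonneg _)).symm
    _ ≤ Real.sqrt (∑ j, ‖x j‖^2) :=
        Real.sqrt_le_sqrt (Finset.single_le_sum (fun j _ => sq_nonneg ‖x j‖) (Finset.mem_univ i))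
    _ = ‖x‖ := (EuclideanSpace.norm_eq x).symm

/-- Liouville's formula, integrated: the determinant of the solution matrix is the
exponential of the integral of the trace. -/
lemma det_eq_exp {n : ℕ} {τ : ℝ} (hτ : 0 < τ) {A : ℝ → Matrix (Fin n) (Fin n) ℝ}
    (hA : ContinuousOn A (Ico 0 τ)) (xs : Fin n → ℝ → EuclideanSpace ℝ (Fin n))
    (hxs : ∀ j, ∀ t ∈ Ico (0:ℝ) τ, HasDerivAt (xs j) (mulVecE (A t) (xs j t)) t)
    (hinit : ∀ j, xs j 0 = EuclideanSpace.single j (1:ℝ)) :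
    ∀ t ∈ Ico (0:ℝ) τ, (Matrix.of fun j i => xs j t i).det
      = Real.exp (∫ s in (0:ℝ)..t, (A s).trace) := by
  intro t₀ ht₀
  set b : ℝ := (t₀ + τ)/2 with hbdef
  have hble : t₀ ≤ b := by rw [hbdef]; linarith [ht₀.2]
  have hb : b ∈ Ioo (0:ℝ) τ := by
    constructor
    · rw [hbdef]; linarith [ht₀.1]
    · rw [hbdef]; linarith [ht₀.2]
  obtain ⟨Ab, K, hAbc, hK0, hKb, hEq⟩ := exists_clamped hA hb
  set g : ℝ → ℝ := fun s => (Ab s).trace with hgdef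
  have hgc : Continuous g := hAbc.matrix_trace
  set J : ℝ → ℝ := fun u => ∫ s in (0:ℝ)..u, g s with hJdef
  have hJd : ∀ u : ℝ, HasDerivAt J (g u) u := fun u =>
    intervalIntegral.integral_hasDerivAt_right (hgc.intervalIntegrable _ _)
      (hgc.stronglyMeasurableAtFilter _ _) hgc.continuousAt
  set D : ℝ → ℝ := fun u => (Matrix.of fun j i => xs j u i).det with hDdef
  have hDd : ∀ u ∈ Icc (0:ℝ) t₀, HasDerivAt D ((A u).trace * D u) u := fun u hu =>
    liouville_hasDerivAt (A u) xs u
      (fun j => hxs j u ⟨hu.1, lt_of_le_of_lt hu.2 ht₀.2⟩)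
  set F : ℝ → ℝ := fun u => D u * Real.exp (-J u) with hFdef
  have hFd : ∀ u ∈ Icc (0:ℝ) t₀, HasDerivAt F 0 u := by
    intro u hu
    have h1 := hDd u hu
    have h2 : HasDerivAt (fun w => Real.exp (-J w)) (Real.exp (-J u) * (-g u)) u :=
      ((hJd u).neg).exp
    have h3 := h1.fun_mul h2
    have htr : (A u).trace = g u := by
      show (A u).trace = (Ab u).trace
      rw [hEq u ⟨hu.1, le_trans hu.2 hble⟩]
    rw [htr] at h3
    rw [show g u * D u * Real.exp (-J u) + D u * (Real.exp (-J u) * -g u) = 0 by ring] at h3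
    exact h3
  have hFcont : ContinuousOn F (Icc (0:ℝ) t₀) :=
    fun u hu => (hFd u hu).continuousAt.continuousWithinAt
  have hconst := constant_of_has_deriv_right_zero hFcont
    (fun u hu => (hFd u ⟨hu.1, hu.2.le⟩).hasDerivWithinAt) t₀ ⟨ht₀.1, le_rfl⟩
  -- F 0 = 1
  have hJ0 : J 0 = 0 := intervalIntegral.integral_same
  have hD0 : D 0 = 1 := by
    have hmat : (Matrix.of fun j i => xs j 0 i) = (1 : Matrix (Fin n) (Fin n) ℝ) := by
      ext j i
      rw [Matrix.of_apply, hinit j, Matrix.one_apply, EuclideanSpace.single_apply]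
      simp [eq_comm]
    rw [hDdef]
    simp only [hmat, Matrix.det_one]
  have hF0 : F 0 = 1 := by
    rw [hFdef]
    simp only [hJ0, hD0, neg_zero, Real.exp_zero, mul_one]
  rw [hF0] at hconst
  -- conclude D t₀ = exp (J t₀)
  have hDt : D t₀ = Real.exp (J t₀) := by
    have h2 : Real.exp (-J t₀) * Real.exp (J t₀) = 1 := by
      rw [← Real.exp_add]; simp
    calc D t₀ = D t₀ * (Real.exp (-J t₀) * Real.exp (J t₀)) := by rw [h2, mul_one]
      _ = (D t₀ * Real.exp (-J t₀)) * Real.exp (J t₀) := by ring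
      _ = 1 * Real.exp (J t₀) := by
          rw [show D t₀ * Real.exp (-J t₀) = 1 from hconst]
      _ = Real.exp (J t₀) := one_mul _
  -- rewrite J t₀ with the unclamped A
  have hJt : J t₀ = ∫ s in (0:ℝ)..t₀, (A s).trace := by
    apply intervalIntegral.integral_congr
    intro s hs
    rw [uIcc_of_le ht₀.1] at hs
    show (Ab s).trace = (A s).trace
    rw [hEq s ⟨hs.1, le_trans hs.2 hble⟩]
  rw [← hJt, ← hDt]

theorem stmt2 {n : ℕ} (hn : 0 < n) (τ : ℝ) (hτ : 0 < τ)
    (A : ℝ → Matrix (Fin n) (Fin n) ℝ) (hA : ContinuousOn A (Set.Ico 0 τ))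
    (hPTA : PTA A τ)
    (hlim : ∀ i j : Fin n, ∃ L : EReal,
      Tendsto (fun t => ((A t i j : ℝ) : EReal)) (𝓝[<] τ) (𝓝 L)) :
    Tendsto (fun t => logNorm (-(A t))) (𝓝[<] τ) atTop := by
  classical
  by_contra hcon
  simp only [tendsto_atTop, not_forall, Filter.not_eventually, not_le] at hcon
  obtain ⟨b₀, hfreq⟩ := hcon
  -- eventual lower bound on diagonal entries
  have hev : ∀ᶠ t in 𝓝[<] τ, ∀ i : Fin n, -(b₀+1) < A t i i := by
    rw [eventually_all]
    intro i
    obtain ⟨L, hL⟩ := hlim i i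
    have hfreq2 : ∃ᶠ t in 𝓝[<] τ, ((-b₀ : ℝ) : EReal) ≤ ((A t i i : ℝ) : EReal) := by
      apply hfreq.mono
      intro t htlt
      have h1 : -(A t i i) ≤ logNorm (-(A t)) := neg_diag_le_logNorm (A t) i
      exact EReal.coe_le_coe_iff.2 (by linarith)
    have hLge : ((-b₀ : ℝ) : EReal) ≤ L := by
      by_contra hlt
      push_neg at hlt
      have hev2 : ∀ᶠ t in 𝓝[<] τ, ((A t i i : ℝ):EReal) < ((-b₀:ℝ):EReal) :=
        hL.eventually (isOpen_Iio.eventually_mem hlt)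
      obtain ⟨t, h1, h2⟩ := (hfreq2.and_eventually hev2).exists
      exact absurd h1 (not_le.2 h2)
    have hmem : L ∈ Ioi ((-(b₀+1):ℝ) : EReal) :=
      lt_of_lt_of_le (EReal.coe_lt_coe_iff.2 (by linarith)) hLge
    have hopen : ∀ᶠ t in 𝓝[<] τ, ((A t i i:ℝ):EReal) ∈ Ioi ((-(b₀+1):ℝ) : EReal) :=
      hL.eventually (isOpen_Ioi.eventually_mem hmem)
    apply hopen.mono
    intro t htm
    exact EReal.coe_lt_coe_iff.1 htm
  set K : ℝ := max ((n:ℝ) * (b₀+1)) 0 with hKdef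
  have hK0 : 0 ≤ K := le_max_right _ _
  have hevtr : ∀ᶠ t in 𝓝[<] τ, -K ≤ (A t).trace := by
    apply hev.mono
    intro t htv
    have h1 : -((n:ℝ)*(b₀+1)) ≤ (A t).trace := by
      rw [Matrix.trace]
      calc -((n:ℝ) * (b₀+1)) = ∑ _i : Fin n, -(b₀+1) := by
            rw [Finset.sum_const, Finset.card_univ, Fintype.card_fin, nsmul_eq_mul]
            ring
        _ ≤ ∑ i, (A t).diag i := Finset.sum_le_sum fun i _ => (htv i).le
    have h2 : -K ≤ -((n:ℝ)*(b₀+1)) := neg_le_neg (le_max_left _ _)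
    linarith
  obtain ⟨l, hl, hIoo⟩ := mem_nhdsLT_iff_exists_Ioo_subset.1 hevtr
  set t₁ : ℝ := max ((l+τ)/2) (τ/2) with ht₁def
  have ht₁0 : 0 ≤ t₁ := le_trans (by linarith : (0:ℝ) ≤ τ/2) (le_max_right _ _)
  have ht₁τ : t₁ < τ := by
    apply max_lt
    · have : l < τ := hl
      linarith
    · linarith
  have ht₁l : l < t₁ := lt_of_lt_of_le (by have : l < τ := hl; linarith : l < (l+τ)/2)
    (le_max_left _ _)
  have htrlow : ∀ s, t₁ ≤ s → s < τ → -K ≤ (A s).trace := fun s hs1 hs2 =>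
    hIoo ⟨lt_of_lt_of_le ht₁l hs1, hs2⟩
  -- construct the n fundamental solutions
  have hsol : ∀ j : Fin n, ∃ x : ℝ → EuclideanSpace ℝ (Fin n),
      x 0 = EuclideanSpace.single j (1:ℝ) ∧
      ∀ t ∈ Set.Ico (0:ℝ) τ, HasDerivAt x (mulVecE (A t) (x t)) t :=
    fun j => exists_sol_Ico hτ hA _
  choose xs hxs0 hxsd using hsol
  set D : ℝ → ℝ := fun u => (Matrix.of fun j i => xs j u i).det with hDdef
  have hDexp : ∀ t ∈ Set.Ico (0:ℝ) τ, D t = Real.exp (∫ s in (0:ℝ)..t, (A s).trace) :=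
    det_eq_exp hτ hA xs hxsd hxs0
  -- D tends to 0 by PTA
  have hten : ∀ j, Tendsto (fun t => ‖xs j t‖) (𝓝[<]τ) (𝓝 0) :=
    fun j => hPTA (xs j) (hxsd j)
  have hNten : Tendsto (fun u => (Matrix.of fun j i => xs j u i)) (𝓝[<]τ)
      (𝓝 (0 : Matrix (Fin n) (Fin n) ℝ)) := by
    refine tendsto_pi_nhds.2 ?_
    intro j
    refine tendsto_pi_nhds.2 ?_
    intro i
    have : Tendsto (fun u => xs j u i) (𝓝[<]τ) (𝓝 0) :=
      squeeze_zero_norm (fun u => coord_norm_le (xs j u) i) (hten j)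
    simpa using this
  have hDten : Tendsto D (𝓝[<]τ) (𝓝 0) := by
    have hcont : Continuous fun M : Matrix (Fin n) (Fin n) ℝ => M.det :=
      continuous_id.matrix_det
    have h0 : (0 : Matrix (Fin n) (Fin n) ℝ).det = 0 := by
      have : Nonempty (Fin n) := ⟨⟨0, hn⟩⟩
      exact Matrix.det_zero
    have := (hcont.tendsto (0 : Matrix (Fin n) (Fin n) ℝ)).comp hNten
    rw [h0] at this
    exact this
  -- lower bound on the integral of the trace
  have htrc : ContinuousOn (fun s => (A s).trace) (Set.Ico 0 τ) := by
    have : Continuous fun M : Matrix (Fin n) (Fin n) ℝ => M.trace := continuous_id.matrix_trace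
    exact this.comp_continuousOn hA
  set Jt : ℝ → ℝ := fun u => ∫ s in (0:ℝ)..u, (A s).trace with hJtdef
  have hJlow : ∀ u, t₁ ≤ u → u < τ → Jt t₁ - K * τ ≤ Jt u := by
    intro u h1 h2
    have hsub1 : uIcc (0:ℝ) t₁ ⊆ Set.Ico 0 τ := by
      rw [uIcc_of_le ht₁0]
      exact fun s hs => ⟨hs.1, lt_of_le_of_lt hs.2 ht₁τ⟩
    have hsub2 : uIcc t₁ u ⊆ Set.Ico 0 τ := by
      rw [uIcc_of_le h1]
      exact fun s hs => ⟨le_trans ht₁0 hs.1, lt_of_le_of_lt hs.2 h2⟩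
    have hi1 : IntervalIntegrable (fun s => (A s).trace) MeasureTheory.volume 0 t₁ :=
      (htrc.mono hsub1).intervalIntegrable
    have hi2 : IntervalIntegrable (fun s => (A s).trace) MeasureTheory.volume t₁ u :=
      (htrc.mono hsub2).intervalIntegrable
    have hadd : Jt u = Jt t₁ + ∫ s in t₁..u, (A s).trace :=
      (intervalIntegral.integral_add_adjacent_intervals hi1 hi2).symm
    have hmono := intervalIntegral.integral_mono_on h1 intervalIntegrable_const hi2
      (fun s hs => htrlow s hs.1 (lt_of_le_of_lt hs.2 h2))
    rw [intervalIntegral.integral_const] at hmono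
    have hKt : K * (u - t₁) ≤ K * τ :=
      mul_le_mul_of_nonneg_left (by linarith) hK0
    have : (u - t₁) • (-K) = -(K * (u - t₁)) := by
      rw [smul_eq_mul]; ring
    rw [this] at hmono
    linarith
  set ε : ℝ := Real.exp (Jt t₁ - K * τ) with hεdef
  have hevge : ∀ᶠ u in 𝓝[<]τ, ε ≤ D u := by
    filter_upwards [Ioo_mem_nhdsLT_of_mem (⟨ht₁τ, le_rfl⟩ : τ ∈ Set.Ioc t₁ τ)] with u hu
    rw [hDexp u ⟨le_trans ht₁0 hu.1.le, hu.2⟩]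
    exact Real.exp_le_exp.2 (hJlow u hu.1.le hu.2)
  have hfin := ge_of_tendsto hDten hevge
  exact absurd hfin (not_le.2 (Real.exp_pos _))
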